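/- Let f be a monotone submodular function with multilinear extension F. Then F is monotone concave: for any x, v ∈ [0,1]^E with x + v ∈ [0,1]^E and v ≥ 0, the map t ↦ F(x + t·v) is concave on [0,1]. In particular, for any x ∈ [0,1]^E and ε ∈ (0,1), F(ε·x) ≥ ε·F(x). -/
import Mathlib


open Finset

/-- The multilinear extension of a set function `f`. -/
noncomputable def multilinear {E : Type*} [DecidableEq E] [Fintype E]
    (f : Finset E → ℝ) (x : E → ℝ) : ℝ :=
  ∑ S : Finset E, f S * (∏ e ∈ S, x e) * ∏ e ∈ Sᶜ, (1 - x e)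

lemma marginal_aux {E : Type*} [DecidableEq E] [Fintype E] (f : Finset E → ℝ)
    (μ : E → Bool × Bool → ℝ) (φ : Bool × Bool → Bool) :
    ∑ c : E → Bool × Bool, (∏ e, μ e (c e)) * f (univ.filter fun e => φ (c e)) =
    ∑ S : Finset E, f S * ((∏ e ∈ S, ∑ v ∈ univ.filter (fun v => φ v = true), μ e v) *
      ∏ e ∈ Sᶜ, ∑ v ∈ univ.filter (fun v => φ v = false), μ e v) := by
  rw [← Finset.sum_fiberwise_of_maps_to (g := fun c : E → Bool × Bool =>
      univ.filter fun e => φ (c e)) (fun c _ => mem_univ _)]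
  refine Finset.sum_congr rfl fun S _ => ?_
  have hfib : univ.filter (fun c : E → Bool × Bool => (univ.filter fun e => φ (c e)) = S)
      = Fintype.piFinset (fun e => if e ∈ S then univ.filter (fun v => φ v = true)
          else univ.filter (fun v => φ v = false)) := by
    ext c
    simp only [mem_filter, mem_univ, true_and, Fintype.mem_piFinset, Finset.ext_iff]
    constructor
    · intro h e
      by_cases he : e ∈ S <;> simp only [he, if_true, if_false, mem_filter, mem_univ, true_and]
      · exact (h e).mpr he
      · simpa [he] using (h e)
    · intro h e
      by_cases he : e ∈ S <;> have := h e <;> simp [he] at this <;> simp [he, this]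
  rw [hfib]
  have : ∀ c ∈ Fintype.piFinset (fun e => if e ∈ S then univ.filter (fun v => φ v = true)
          else univ.filter (fun v => φ v = false)),
      (∏ e, μ e (c e)) * f (univ.filter fun e => φ (c e)) = f S * ∏ e, μ e (c e) := by
    intro c hc
    have : (univ.filter fun e => φ (c e)) = S := by
      ext e
      have := (Fintype.mem_piFinset.mp hc) e
      by_cases he : e ∈ S <;> simp [he] at this <;> simp [he, this]
    rw [this, mul_comm]
  rw [Finset.sum_congr rfl this, ← Finset.mul_sum, ← Finset.prod_univ_sum]
  congr 1
  rw [← Finset.prod_mul_prod_compl S]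
  congr 1
  · exact Finset.prod_congr rfl fun e he => by rw [if_pos he]
  · exact Finset.prod_congr rfl fun e he => by rw [if_neg (mem_compl.mp he)]

lemma marg_eq {E : Type*} [DecidableEq E] [Fintype E] (f : Finset E → ℝ)
    (μ : E → Bool × Bool → ℝ) (φ : Bool × Bool → Bool) (p : E → ℝ)
    (h1 : ∀ e, ∑ v ∈ univ.filter (fun v => φ v = true), μ e v = p e)
    (h0 : ∀ e, ∑ v ∈ univ.filter (fun v => φ v = false), μ e v = 1 - p e) :
    ∑ c : E → Bool × Bool, (∏ e, μ e (c e)) * f (univ.filter fun e => φ (c e)) =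
      multilinear f p := by
  rw [marginal_aux, multilinear]
  refine Finset.sum_congr rfl fun S _ => ?_
  rw [mul_assoc]
  congr 1
  congr 1
  · exact Finset.prod_congr rfl fun e _ => h1 e
  · exact Finset.prod_congr rfl fun e _ => h0 e

lemma multilinear_dr {E : Type*} [DecidableEq E] [Fintype E] (f : Finset E → ℝ)
    (hsub : ∀ A B : Finset E, f (A ∪ B) + f (A ∩ B) ≤ f A + f B)
    (y z w : E → ℝ) (hy : ∀ e, 0 ≤ y e) (hyz : ∀ e, y e ≤ z e)
    (hw : ∀ e, 0 ≤ w e) (hzw : ∀ e, z e + w e ≤ 1) :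
    multilinear f (fun e => z e + w e) + multilinear f y ≤
      multilinear f (fun e => y e + w e) + multilinear f z := by
  set μ : E → Bool × Bool → ℝ := fun e v =>
    if v.1 then (if v.2 then y e else w e) else (if v.2 then z e - y e else 1 - z e - w e)
      with hμ
  -- the four marginals
  have hA : ∑ c : E → Bool × Bool, (∏ e, μ e (c e)) * f (univ.filter fun e => (c e).1) =
      multilinear f (fun e => y e + w e) := by
    refine marg_eq f μ (fun v => v.1) _ (fun e => ?_) (fun e => ?_) <;>
      · simp [Finset.sum_filter, Fintype.sum_prod_type, hμ]; try ring
  have hB : ∑ c : E → Bool × Bool, (∏ e, μ e (c e)) * f (univ.filter fun e => (c e).2) =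
      multilinear f z := by
    refine marg_eq f μ (fun v => v.2) _ (fun e => ?_) (fun e => ?_) <;>
      · simp [Finset.sum_filter, Fintype.sum_prod_type, hμ]; try ring
  have hU : ∑ c : E → Bool × Bool,
      (∏ e, μ e (c e)) * f (univ.filter fun e => (c e).1 || (c e).2) =
      multilinear f (fun e => z e + w e) := by
    refine marg_eq f μ (fun v => v.1 || v.2) _ (fun e => ?_) (fun e => ?_) <;>
      · simp [Finset.sum_filter, Fintype.sum_prod_type, hμ]; try ring
  have hI : ∑ c : E → Bool × Bool,
      (∏ e, μ e (c e)) * f (univ.filter fun e => (c e).1 && (c e).2) =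
      multilinear f y := by
    refine marg_eq f μ (fun v => v.1 && v.2) _ (fun e => ?_) (fun e => ?_) <;>
      · simp [Finset.sum_filter, Fintype.sum_prod_type, hμ]; try ring
  rw [← hA, ← hB, ← hU, ← hI, ← Finset.sum_add_distrib, ← Finset.sum_add_distrib]
  refine Finset.sum_le_sum fun c _ => ?_
  have hP : (0:ℝ) ≤ ∏ e, μ e (c e) := by
    refine Finset.prod_nonneg fun e _ => ?_
    rcases c e with ⟨a, b⟩
    cases a <;> cases b <;> simp [hμ] <;> [skip; linarith [hyz e, hzw e, hw e]; skip; skip] <;>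
      linarith [hy e, hyz e, hw e, hzw e]
  rw [← mul_add, ← mul_add]
  refine mul_le_mul_of_nonneg_left ?_ hP
  have hset : (univ.filter fun e => (c e).1 || (c e).2) =
      (univ.filter fun e => (c e).1) ∪ (univ.filter fun e => (c e).2) := by
    ext e; simp
  have hset2 : (univ.filter fun e => (c e).1 && (c e).2) =
      (univ.filter fun e => (c e).1) ∩ (univ.filter fun e => (c e).2) := by
    ext e; simp
  rw [hset, hset2]
  exact hsub _ _

lemma multilinear_zero {E : Type*} [DecidableEq E] [Fintype E] (f : Finset E → ℝ)
    (hf0 : f ∅ = 0) : multilinear f (fun _ => (0:ℝ)) = 0 := by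
  unfold multilinear
  rw [Finset.sum_eq_single ∅]
  · simp [hf0]
  · intro S _ hS
    obtain ⟨e, he⟩ := Finset.nonempty_iff_ne_empty.mpr hS
    rw [Finset.prod_eq_zero he rfl]; ring
  · simp

/-- the multilinear extension `F` of a (normalized) monotone
submodular function is monotone concave: for `x, v ≥ 0` with `x + v ∈ [0,1]^E`,
the map `t ↦ F(x + t v)` is concave on `[0,1]`; in particular
`F(ε x) ≥ ε F(x)` for `x ∈ [0,1]^E` and `ε ∈ (0,1)`. -/
theorem multilinear_monotone_concave {E : Type*} [DecidableEq E] [Fintype E]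
    (f : Finset E → ℝ) (hf0 : f ∅ = 0)
    (hmono : ∀ A B : Finset E, A ⊆ B → f A ≤ f B)
    (hsub : ∀ A B : Finset E, f (A ∪ B) + f (A ∩ B) ≤ f A + f B) :
    (∀ x v : E → ℝ, (∀ e, 0 ≤ x e) → (∀ e, 0 ≤ v e) → (∀ e, x e + v e ≤ 1) →
      ConcaveOn ℝ (Set.Icc (0 : ℝ) 1) (fun t : ℝ => multilinear f (x + t • v))) ∧
    (∀ x : E → ℝ, (∀ e, 0 ≤ x e ∧ x e ≤ 1) → ∀ ε ∈ Set.Ioo (0 : ℝ) 1,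
      ε * multilinear f x ≤ multilinear f (ε • x)) := by
  have key : ∀ x v : E → ℝ, (∀ e, 0 ≤ x e) → (∀ e, 0 ≤ v e) → (∀ e, x e + v e ≤ 1) →
      ConcaveOn ℝ (Set.Icc (0 : ℝ) 1) (fun t : ℝ => multilinear f (x + t • v)) := by
    intro x v hx hv hxv
    set g : ℝ → ℝ := fun t => multilinear f (x + t • v) with hgdef
    have hdiff : Differentiable ℝ g := by
      rw [hgdef]; unfold multilinear
      simp only [Pi.add_apply, Pi.smul_apply, smul_eq_mul]
      fun_prop
    have hincr : ∀ a b s : ℝ, 0 ≤ a → a ≤ b → 0 ≤ s → b + s ≤ 1 →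
        g (b + s) - g b ≤ g (a + s) - g a := by
      intro a b s ha hab hs hbs
      have hD := multilinear_dr f hsub (x + a • v) (x + b • v) (s • v)
        (fun e => by
          have := mul_nonneg ha (hv e)
          simp only [Pi.add_apply, Pi.smul_apply, smul_eq_mul]; linarith [hx e])
        (fun e => by
          have := mul_le_mul_of_nonneg_right hab (hv e)
          simp only [Pi.add_apply, Pi.smul_apply, smul_eq_mul]; linarith)
        (fun e => by
          have := mul_nonneg hs (hv e)
          simp only [Pi.smul_apply, smul_eq_mul]; linarith)
        (fun e => by
          have h1 := mul_le_mul_of_nonneg_right hbs (hv e)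
          simp only [Pi.add_apply, Pi.smul_apply, smul_eq_mul]
          nlinarith [hxv e, hv e])
      have e1 : (fun e => (x + b • v) e + (s • v) e) = x + (b + s) • v := by
        funext e; simp [Pi.add_apply]; ring
      have e2 : (fun e => (x + a • v) e + (s • v) e) = x + (a + s) • v := by
        funext e; simp [Pi.add_apply]; ring
      rw [e1, e2] at hD
      have hb' : multilinear f (x + (b+s) • v) + multilinear f (x + a • v) ≤
          multilinear f (x + (a+s) • v) + multilinear f (x + b • v) := hD
      simp only [hgdef]
      linarith
    have hanti : AntitoneOn (deriv g) (interior (Set.Icc (0:ℝ) 1)) := by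
      rw [interior_Icc]
      intro a ha b hb hab
      rcases eq_or_lt_of_le hab with rfl | hlt
      · exact le_refl _
      have slopea : Filter.Tendsto (slope g a) (nhdsWithin a (Set.Ioi a))
          (nhds (deriv g a)) :=
        (hasDerivAt_iff_tendsto_slope.mp (hdiff a).hasDerivAt).mono_left
          (nhdsWithin_mono a fun u hu => ne_of_gt hu)
      have slopeb : Filter.Tendsto (slope g b) (nhdsWithin b (Set.Ioi b))
          (nhds (deriv g b)) :=
        (hasDerivAt_iff_tendsto_slope.mp (hdiff b).hasDerivAt).mono_left
          (nhdsWithin_mono b fun u hu => ne_of_gt hu)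
      have h1 : Filter.Tendsto (fun u : ℝ => u + (b - a)) (nhdsWithin a (Set.Ioi a))
          (nhdsWithin b (Set.Ioi b)) := by
        rw [tendsto_nhdsWithin_iff]
        constructor
        · have : Filter.Tendsto (fun u : ℝ => u + (b - a)) (nhds a) (nhds (a + (b - a))) :=
            (continuous_add_right (b - a)).tendsto a
          rw [show a + (b - a) = b by ring] at this
          exact this.mono_left nhdsWithin_le_nhds
        · filter_upwards [self_mem_nhdsWithin] with u hu
          simp only [Set.mem_Ioi] at hu ⊢
          linarith
      have hsb : Filter.Tendsto (fun u => slope g b (u + (b - a)))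
          (nhdsWithin a (Set.Ioi a)) (nhds (deriv g b)) := slopeb.comp h1
      refine le_of_tendsto_of_tendsto hsb slopea ?_
      have hmem : Set.Ioo a (a + (1 - b)) ∈ nhdsWithin a (Set.Ioi a) :=
        Ioo_mem_nhdsGT_of_mem ⟨le_refl a, by linarith [hb.2]⟩
      filter_upwards [hmem] with u hu
      obtain ⟨hu1, hu2⟩ := hu
      set s := u - a with hs
      have hs0 : 0 < s := by simp [hs]; linarith
      have hineq := hincr a b s (le_of_lt ha.1) (le_of_lt hlt) (le_of_lt hs0)
        (by simp [hs]; linarith)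
      rw [slope_def_field, slope_def_field]
      have hd1 : u + (b - a) - b = s := by ring
      have hd2 : u - a = s := by ring
      rw [hd1, hd2]
      have hbs : b + s = u + (b - a) := by ring
      have has : a + s = u := by ring
      rw [hbs, has] at hineq
      exact div_le_div_of_nonneg_right hineq hs0.le |>.trans_eq rfl
    exact hanti.concaveOn_of_deriv (convex_Icc 0 1) hdiff.continuous.continuousOn
      hdiff.differentiableOn
  refine ⟨key, ?_⟩
  intro x hx ε hε
  have hcon := key (fun _ => 0) x (fun e => le_refl 0) (fun e => (hx e).1)
    (fun e => by simpa using (hx e).2)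
  have h1 : (1:ℝ) ∈ Set.Icc (0:ℝ) 1 := by norm_num
  have h0 : (0:ℝ) ∈ Set.Icc (0:ℝ) 1 := by norm_num
  have hcc := hcon.2 h1 h0 (show (0:ℝ) ≤ ε from hε.1.le) (show (0:ℝ) ≤ 1 - ε by linarith [hε.2]) (show ε + (1 - ε) = 1 by ring)
  simp only [smul_eq_mul, mul_one, mul_zero, add_zero] at hcc
  have ea : ((fun _ => (0:ℝ)) + (1:ℝ) • x) = x := by funext e; simp
  have eb : ((fun _ => (0:ℝ)) + (0:ℝ) • x) = (fun _ => (0:ℝ)) := by funext e; simp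
  have ec : ((fun _ => (0:ℝ)) + ε • x) = ε • x := by funext e; simp
  rw [ea, eb, ec, multilinear_zero f hf0] at hcc
  linarith
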